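/- Suppose r_1 < r_2 < ⋯ < r_{2t} in I and c < d in I (lexicographic order) satisfy A_t(r_1, c) = A_t(r_1, d) = 1, A_t(r_{2j}, d) = 1 for all j ∈ [t], and A_t(r_{2j+1}, c) = 1 for all j ∈ [t−1] (an occurrence of the pattern Q_t in A_t with rows r_1, …, r_{2t} and columns c, d). If type(r_1, r_{2t}) ≥ type(c, d), then type(r_1, r_{2t}) = type(c, d) = 1. -/
import Mathlib


/-- `⟨j_1,…,j_m⟩ = 1 + Σ_{i=1}^m (j_i−1)·k^{m−i}`, the injection `[k]^m → [k^m]`. -/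
def ang (k : ℕ) (l : List ℕ) : ℕ := l.foldl (fun acc j => acc * k + (j - 1)) 0 + 1

/-- The vector `v[j_1,…,j_t]`, given by a function `js : ℕ → ℕ` with `js r` being `j_{r+1}`.
Coordinates are flattened: flat coordinate `i` is coordinate `i % k` (0-indexed) of
block `i / k` (0-indexed).  It is 0 everywhere except at coordinate `j_r` (1-indexed) of
block `r` (1-indexed), where it equals `⟨j_1,…,j_{r−1}⟩`. -/
def vVec (k : ℕ) (js : ℕ → ℕ) (i : ℕ) : ℤ :=
  if i % k + 1 = js (i / k) then (ang k ((List.range (i / k)).map js) : ℤ) else 0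

/-- Membership in `I = {1,…,k^t}^{tk}`. -/
def memI (t k : ℕ) (a : Fin (t * k) → ℕ) : Prop := ∀ i, 1 ≤ a i ∧ a i ≤ k ^ t

/-- Lexicographic (strict) order on tuples. -/
def lexLt {N : ℕ} (a b : Fin N → ℕ) : Prop :=
  ∃ i : Fin N, (∀ j, j < i → a j = b j) ∧ a i < b i

/-- `js` codes an element `(j_1,…,j_t) ∈ [k]^t`. -/
def validJs (t k : ℕ) (js : ℕ → ℕ) : Prop := ∀ r, r < t → 1 ≤ js r ∧ js r ≤ k

/-- The entry `A_t(a,b)` is 1 iff `b − a ∈ S`, i.e. `b − a = v[j_1,…,j_t]` for some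
`(j_1,…,j_t) ∈ [k]^t`. -/
def AtOne (t k : ℕ) (a b : Fin (t * k) → ℕ) : Prop :=
  ∃ js : ℕ → ℕ, validJs t k js ∧
    ∀ i : Fin (t * k), (b i : ℤ) - (a i : ℤ) = vVec k js i.val

/-- `typeOf a b` is the (1-indexed) first block where `a` and `b` differ. -/
noncomputable def typeOf (t k : ℕ) (a b : Fin (t * k) → ℕ) : ℕ :=
  sInf {r | ∃ i : Fin (t * k), i.val / k + 1 = r ∧ a i ≠ b i}

/-- strict tuple lex order on first `t` coordinates -/
def tLt (t : ℕ) (x y : ℕ → ℕ) : Prop :=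
  ∃ p, p < t ∧ (∀ q, q < p → x q = y q) ∧ x p < y p

/-- foldl core of ang -/
def Fc (k : ℕ) (l : List ℕ) : ℕ := l.foldl (fun acc j => acc * k + (j - 1)) 0

lemma ang_eq_Fc (k : ℕ) (l : List ℕ) : ang k l = Fc k l + 1 := rfl

lemma Fc_append (k : ℕ) (l : List ℕ) (j : ℕ) :
    Fc k (l ++ [j]) = Fc k l * k + (j - 1) := by
  simp [Fc, List.foldl_append]

lemma Fc_range_succ (k : ℕ) (x : ℕ → ℕ) (p : ℕ) :
    Fc k ((List.range (p+1)).map x) = Fc k ((List.range p).map x) * k + (x p - 1) := by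
  rw [List.range_succ, List.map_append]
  simp [Fc_append]

lemma Fc_congr (k : ℕ) (x y : ℕ → ℕ) (p : ℕ) (h : ∀ q, q < p → x q = y q) :
    Fc k ((List.range p).map x) = Fc k ((List.range p).map y) := by
  congr 1
  apply List.map_congr_left
  intro q hq
  exact h q (List.mem_range.mp hq)

lemma ang_congr (k : ℕ) (x y : ℕ → ℕ) (p : ℕ) (h : ∀ q, q < p → x q = y q) :
    ang k ((List.range p).map x) = ang k ((List.range p).map y) := by
  rw [ang_eq_Fc, ang_eq_Fc, Fc_congr k x y p h]

lemma ang_pos (k : ℕ) (l : List ℕ) : 1 ≤ ang k l := by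
  rw [ang_eq_Fc]; omega

/-- strict monotonicity of ang on lex-ordered valid prefixes -/
lemma ang_lt (k : ℕ) (x y : ℕ → ℕ) (p p0 : ℕ) (hp0 : p0 < p)
    (hagree : ∀ q, q < p0 → x q = y q) (hlt : x p0 < y p0)
    (hxv : ∀ q, q < p → 1 ≤ x q ∧ x q ≤ k) :
    ang k ((List.range p).map x) < ang k ((List.range p).map y) := by
  rw [ang_eq_Fc, ang_eq_Fc]
  have key : ∀ m, p0 < m → m ≤ p →
      Fc k ((List.range m).map x) < Fc k ((List.range m).map y) := by
    intro m
    induction m with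
    | zero => omega
    | succ n ih =>
      intro h1 h2
      rcases Nat.lt_or_ge p0 n with h3 | h3
      · have hn := ih h3 (by omega)
        rw [Fc_range_succ, Fc_range_succ]
        have hx : x n ≤ k := (hxv n (by omega)).2
        have hk1 : 1 ≤ k := le_trans (hxv n (by omega)).1 hx
        have hmul : (Fc k ((List.range n).map x) + 1) * k ≤ Fc k ((List.range n).map y) * k :=
          Nat.mul_le_mul_right k hn
        have hexp : (Fc k ((List.range n).map x) + 1) * k
            = Fc k ((List.range n).map x) * k + k := by ring
        omega
      · have hn : p0 = n := by omega
        subst hn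
        rw [Fc_range_succ, Fc_range_succ, Fc_congr k x y p0 hagree]
        have hx1 : 1 ≤ x p0 := (hxv p0 (by omega)).1
        omega
  have := key p hp0 le_rfl
  omega

section
variable {t k : ℕ}

lemma vVec_blockval (hk : 1 ≤ k) (js : ℕ → ℕ) (p q : ℕ) (hq : q < k) :
    vVec k js (p * k + q) =
      if q + 1 = js p then (ang k ((List.range p).map js) : ℤ) else 0 := by
  unfold vVec
  have h1 : (p * k + q) / k = p := by
    rw [Nat.add_comm, Nat.add_mul_div_right _ _ (by omega : 0 < k), Nat.div_eq_of_lt hq,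
      Nat.zero_add]
  have h2 : (p * k + q) % k = q := by
    rw [Nat.add_comm, Nat.add_mul_mod_self_right, Nat.mod_eq_of_lt hq]
  rw [h1, h2]

/-- vVec agrees if tuples agree on blocks up to `n/k` -/
lemma vVec_congr (j j' : ℕ → ℕ) (n : ℕ) (h : ∀ q, q ≤ n / k → j q = j' q) :
    vVec k j n = vVec k j' n := by
  unfold vVec
  rw [h (n / k) le_rfl, ang_congr k j j' _ (fun q hq => h q (le_of_lt hq))]

/-- trichotomy for tuples -/
lemma tLt_trichotomy (x y : ℕ → ℕ) :
    (∀ q, q < t → x q = y q) ∨ tLt t x y ∨ tLt t y x := by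
  classical
  by_cases h : ∀ q, q < t → x q = y q
  · exact Or.inl h
  · push_neg at h
    obtain ⟨q0, hq0, hne⟩ := h
    have hP : ∃ p, p < t ∧ x p ≠ y p := ⟨q0, hq0, hne⟩
    have hpt : Nat.find hP < t := (Nat.find_spec hP).1
    have hpne : x (Nat.find hP) ≠ y (Nat.find hP) := (Nat.find_spec hP).2
    have hagree : ∀ q, q < Nat.find hP → x q = y q := by
      intro q hq
      by_contra hne'
      exact (Nat.find_min hP hq) ⟨by omega, hne'⟩
    rcases Nat.lt_or_ge (x (Nat.find hP)) (y (Nat.find hP)) with h1 | h1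
    · exact Or.inr (Or.inl ⟨Nat.find hP, hpt, hagree, h1⟩)
    · exact Or.inr (Or.inr ⟨Nat.find hP, hpt, fun q hq => (hagree q hq).symm, by omega⟩)

/-- the witness of tLt is unique -/
lemma tLt_witness_unique {x y : ℕ → ℕ} {p p' : ℕ}
    (hag1 : ∀ q, q < p → x q = y q) (hlt1 : x p < y p)
    (hag2 : ∀ q, q < p' → x q = y q) (hlt2 : x p' < y p') : p = p' := by
  by_contra hne
  rcases Nat.lt_or_ge p p' with h | h
  · have := hag2 p h; omega
  · have := hag1 p' (by omega); omega

lemma tLt_coord_le {x y : ℕ → ℕ} (h : tLt t x y) (p : ℕ)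
    (hagree : ∀ q, q < p → x q = y q) : x p ≤ y p := by
  obtain ⟨p', _, hag', hlt'⟩ := h
  rcases Nat.lt_trichotomy p' p with h1 | h1 | h1
  · have := hagree p' h1; omega
  · exact le_of_lt (h1 ▸ hlt')
  · exact le_of_eq (hag' p h1)

lemma lexLt_asymm {N : ℕ} {x y : Fin N → ℕ} (h1 : lexLt x y) (h2 : lexLt y x) : False := by
  obtain ⟨i1, hag1, hlt1⟩ := h1
  obtain ⟨i2, hag2, hlt2⟩ := h2
  rcases lt_trichotomy i1 i2 with h | h | h
  · have := hag2 i1 h; omega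
  · subst h; omega
  · have := hag1 i2 h; omega

end

section
variable {t k : ℕ}

lemma div_lt_top (hk : 1 ≤ k) {i : ℕ} (h : i < t * k) : i / k < t :=
  Nat.div_lt_of_lt_mul (by rw [Nat.mul_comm] at h; exact h)

lemma block_decomp (hk : 1 ≤ k) {n p jp : ℕ} (hjp : 1 ≤ jp) (hjk : jp ≤ k)
    (hn : n < p * k + (jp - 1)) :
    (n / k < p) ∨ (n / k = p ∧ n % k < jp - 1) := by
  have hd : n / k * k + n % k = n := by rw [Nat.mul_comm]; exact Nat.div_add_mod n k
  have hm : n % k < k := Nat.mod_lt _ (by omega)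
  have hdp : n / k ≤ p := by
    by_contra hc
    push_neg at hc
    have : (p + 1) * k ≤ n / k * k := Nat.mul_le_mul_right _ hc
    have h2 : (p + 1) * k = p * k + k := by ring
    omega
  rcases Nat.lt_or_ge (n / k) p with h | h
  · exact Or.inl h
  · have hep : n / k = p := le_antisymm hdp h
    refine Or.inr ⟨hep, ?_⟩
    rw [hep] at hd
    omega

lemma vVec_pair_eq {j j' : ℕ → ℕ} (n : ℕ) {p : ℕ} (hag : ∀ q, q < p → j q = j' q)
    (hn : n / k < p) : vVec k j n = vVec k j' n :=
  vVec_congr j j' n (fun q hq => hag q (by omega))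

lemma vVec_at (hk : 1 ≤ k) (js : ℕ → ℕ) {n p q : ℕ} (hq : q < k)
    (hn : n = p * k + q) :
    vVec k js n = if q + 1 = js p then (ang k ((List.range p).map js) : ℤ) else 0 := by
  rw [hn]; exact vVec_blockval hk js p q hq

/-- tuple-lt implies row lex-lt, for rows with difference V(j) - V(j') -/
lemma rows_lexLt_of_tLt (hk : 1 ≤ k) {x y : Fin (t*k) → ℕ} {j j' : ℕ → ℕ}
    (hv : validJs t k j) (hv' : validJs t k j')
    (heq : ∀ i : Fin (t*k), (y i : ℤ) - x i = vVec k j i.val - vVec k j' i.val)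
    {p : ℕ} (hpt : p < t) (hag : ∀ q, q < p → j q = j' q) (hlt : j p < j' p) :
    lexLt x y := by
  have hj1 : 1 ≤ j p := (hv p hpt).1
  have hjk : j p ≤ k := (hv p hpt).2
  have hj'k : j' p ≤ k := (hv' p hpt).2
  have hi0 : p * k + (j p - 1) < t * k := by
    have : (p + 1) * k ≤ t * k := Nat.mul_le_mul_right _ (by omega)
    have h2 : (p + 1) * k = p * k + k := by ring
    omega
  refine ⟨⟨p * k + (j p - 1), hi0⟩, ?_, ?_⟩
  · intro fl hfl
    have hfl' : fl.val < p * k + (j p - 1) := hfl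
    have hz : vVec k j fl.val = vVec k j' fl.val := by
      rcases block_decomp hk hj1 hjk hfl' with h | ⟨h1, h2⟩
      · exact vVec_pair_eq fl.val hag h
      · have hd : fl.val = p * k + fl.val % k := by
          have h5 : fl.val / k * k + fl.val % k = fl.val := by
            rw [Nat.mul_comm]; exact Nat.div_add_mod fl.val k
          rw [h1] at h5
          omega
        rw [vVec_at hk j (by omega) hd, vVec_at hk j' (by omega) hd]
        rw [if_neg (by omega), if_neg (by omega)]
    have := heq fl
    rw [hz] at this
    omega
  · have hd : p * k + (j p - 1) = p * k + (j p - 1) := rfl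
    have := heq ⟨p * k + (j p - 1), hi0⟩
    rw [vVec_at hk j (by omega) hd, vVec_at hk j' (by omega) hd,
      if_pos (by omega), if_neg (by omega)] at this
    have hpos := ang_pos k ((List.range p).map j)
    omega

/-- row lex-lt implies tuple-lt -/
lemma tLt_of_rows_lexLt (hk : 1 ≤ k) {x y : Fin (t*k) → ℕ} {j j' : ℕ → ℕ}
    (hv : validJs t k j) (hv' : validJs t k j')
    (heq : ∀ i : Fin (t*k), (y i : ℤ) - x i = vVec k j i.val - vVec k j' i.val)
    (hxy : lexLt x y) : tLt t j j' := by
  rcases tLt_trichotomy (t := t) j j' with h | h | h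
  · exfalso
    obtain ⟨i, hagr, hlt⟩ := hxy
    have hz : vVec k j i.val = vVec k j' i.val := by
      apply vVec_congr
      intro q hq
      apply h
      have h5 : i.val / k < t := div_lt_top hk i.isLt
      omega
    have := heq i
    omega
  · exact h
  · exfalso
    obtain ⟨p, hpt, hag, hlt⟩ := h
    have heq' : ∀ i : Fin (t*k), (x i : ℤ) - y i = vVec k j' i.val - vVec k j i.val := by
      intro i
      have := heq i
      omega
    exact lexLt_asymm hxy (rows_lexLt_of_tLt hk hv' hv heq' hpt hag hlt)

lemma force {x y : Fin (t*k) → ℕ} (hxy : lexLt x y) (i0 : ℕ) (hi0 : i0 < t * k)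
    (hzero : ∀ i, ∀ hi : i < t * k, i < i0 → (y ⟨i, hi⟩ : ℤ) - x ⟨i, hi⟩ = 0)
    (hneg : (y ⟨i0, hi0⟩ : ℤ) - x ⟨i0, hi0⟩ < 0) : False := by
  obtain ⟨i1, hagr, hlt⟩ := hxy
  rcases Nat.lt_trichotomy i1.val i0 with h | h | h
  · have := hzero i1.val i1.isLt h
    simp only [Fin.eta] at this
    omega
  · have : i1 = ⟨i0, hi0⟩ := Fin.ext h
    rw [this] at hlt
    omega
  · have := hagr ⟨i0, hi0⟩ h
    omega

lemma typeOf_eq (hk : 1 ≤ k) {x y : Fin (t*k) → ℕ} {j j' : ℕ → ℕ}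
    (hv : validJs t k j) (hv' : validJs t k j')
    (heq : ∀ i : Fin (t*k), (y i : ℤ) - x i = vVec k j i.val - vVec k j' i.val)
    {p : ℕ} (hpt : p < t) (hag : ∀ q, q < p → j q = j' q) (hlt : j p < j' p) :
    typeOf t k x y = p + 1 := by
  have hj1 : 1 ≤ j p := (hv p hpt).1
  have hjk : j p ≤ k := (hv p hpt).2
  have hi0 : p * k + (j p - 1) < t * k := by
    have : (p + 1) * k ≤ t * k := Nat.mul_le_mul_right _ (by omega)
    have h2 : (p + 1) * k = p * k + k := by ring
    omega
  have hdiv : (p * k + (j p - 1)) / k = p := by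
    rw [Nat.add_comm, Nat.add_mul_div_right _ _ (by omega : 0 < k),
      Nat.div_eq_of_lt (by omega), Nat.zero_add]
  have hmem : p + 1 ∈ {r | ∃ i : Fin (t*k), i.val / k + 1 = r ∧ x i ≠ y i} := by
    refine ⟨⟨p * k + (j p - 1), hi0⟩, by show _ / k + 1 = p + 1; rw [hdiv], ?_⟩
    have := heq ⟨p * k + (j p - 1), hi0⟩
    rw [vVec_at hk j (by omega : j p - 1 < k) rfl, vVec_at hk j' (by omega : j p - 1 < k) rfl,
      if_pos (by omega), if_neg (by omega)] at this
    have hpos := ang_pos k ((List.range p).map j)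
    intro hc
    rw [hc] at this
    omega
  apply le_antisymm (Nat.sInf_le hmem)
  apply le_csInf ⟨_, hmem⟩
  intro b hb
  obtain ⟨i, hib, hne⟩ := hb
  by_contra hc
  push_neg at hc
  have hik : i.val / k < p := by omega
  have : vVec k j i.val = vVec k j' i.val := vVec_pair_eq i.val hag hik
  have h2 := heq i
  rw [this] at h2
  have : x i = y i := by omega
  exact hne this

end

section
variable {t k : ℕ}

/-- The block-level forcing engine: if the block-`p` profile of the row difference
has a negative first nonzero entry, we contradict `lexLt x y`. -/
lemma mega (hk : 1 ≤ k) {x y : Fin (t*k) → ℕ} {j1 j2 j3 j4 : ℕ → ℕ} {p : ℕ} (hpt : p < t)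
    (hxy : lexLt x y)
    (heq : ∀ i : Fin (t*k), (y i : ℤ) - x i
      = vVec k j1 i.val - vVec k j2 i.val + vVec k j3 i.val - vVec k j4 i.val)
    (hag14 : ∀ q, q < p → j1 q = j4 q) (hag23 : ∀ q, q < p → j2 q = j3 q)
    {W A : ℕ} (hW : ang k ((List.range p).map j1) = W)
    (hA : ang k ((List.range p).map j3) = A)
    (q0 : ℕ) (hq0 : q0 < k)
    (hneg : (if q0 + 1 = j1 p then (W : ℤ) else 0) - (if q0 + 1 = j2 p then (A : ℤ) else 0)
        + (if q0 + 1 = j3 p then (A : ℤ) else 0) - (if q0 + 1 = j4 p then (W : ℤ) else 0) < 0)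
    (hzero : ∀ q, q < q0 →
        (if q + 1 = j1 p then (W : ℤ) else 0) - (if q + 1 = j2 p then (A : ℤ) else 0)
        + (if q + 1 = j3 p then (A : ℤ) else 0) - (if q + 1 = j4 p then (W : ℤ) else 0) = 0) :
    False := by
  have hW4 : ang k ((List.range p).map j4) = W := by
    rw [← hW]; exact (ang_congr k j1 j4 p hag14).symm
  have hA2 : ang k ((List.range p).map j2) = A := by
    rw [← hA]; exact ang_congr k j2 j3 p hag23
  have hi0 : p * k + q0 < t * k := by
    have : (p + 1) * k ≤ t * k := Nat.mul_le_mul_right _ (by omega)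
    have h2 : (p + 1) * k = p * k + k := by ring
    omega
  apply force hxy (p * k + q0) hi0
  · intro i hi hilt
    have hval := heq ⟨i, hi⟩
    have hq0k : q0 < k := hq0
    rcases block_decomp hk (jp := q0 + 1) (by omega) (by omega)
        (by omega : i < p * k + ((q0+1) - 1)) with h | ⟨h1, h2⟩
    · have e14 : vVec k j1 i = vVec k j4 i := vVec_pair_eq i hag14 h
      have e23 : vVec k j2 i = vVec k j3 i := vVec_pair_eq i hag23 h
      simp only [Fin.val_mk] at hval
      rw [e14, e23] at hval
      omega
    · have hd : i = p * k + i % k := by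
        have h5 : i / k * k + i % k = i := by
          rw [Nat.mul_comm]; exact Nat.div_add_mod i k
        rw [h1] at h5; omega
      have hmk : i % k < k := Nat.mod_lt _ (by omega)
      simp only [Fin.val_mk] at hval
      rw [vVec_at hk j1 hmk hd, vVec_at hk j2 hmk hd, vVec_at hk j3 hmk hd,
        vVec_at hk j4 hmk hd, hW, hA, hW4, hA2] at hval
      have hz := hzero (i % k) (by omega)
      rw [hval]
      linarith [hz]
  · have hval := heq ⟨p * k + q0, hi0⟩
    simp only [Fin.val_mk] at hval
    rw [vVec_at hk j1 hq0 rfl, vVec_at hk j2 hq0 rfl, vVec_at hk j3 hq0 rfl,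
      vVec_at hk j4 hq0 rfl, hW, hA, hW4, hA2] at hval
    rw [hval]
    linarith [hneg]

end

/-- An occurrence of `Q_t` in `A_t` with rows `r 0 < r 1 < ⋯ < r (2t−1)` and columns
`c < d`: `A_t(r 0, c) = A_t(r 0, d) = 1`, `A_t(r_{2j}, d) = 1` for `j ∈ [t]`
(0-indexed rows `2j+1` for `j < t`), and `A_t(r_{2j+1}, c) = 1` for `j ∈ [t−1]`
(0-indexed rows `2j+2` for `j < t−1`).
If `type(r 0, r (2t−1)) ≥ type(c,d)` then both types equal 1. -/
theorem stmt9 (t k : ℕ) (ht : 2 ≤ t) (hk : 2 ≤ k)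
    (r : Fin (2 * t) → Fin (t * k) → ℕ) (c d : Fin (t * k) → ℕ)
    (hr : ∀ i, memI t k (r i)) (hc : memI t k c) (hd : memI t k d)
    (hmono : ∀ i j : Fin (2 * t), i < j → lexLt (r i) (r j))
    (hcd : lexLt c d)
    (h0c : AtOne t k (r ⟨0, by omega⟩) c)
    (h0d : AtOne t k (r ⟨0, by omega⟩) d)
    (h1 : ∀ j : ℕ, ∀ h : j < t, AtOne t k (r ⟨2 * j + 1, by omega⟩) d)
    (h2 : ∀ j : ℕ, ∀ h : j < t - 1, AtOne t k (r ⟨2 * j + 2, by omega⟩) c)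
    (hty : typeOf t k c d ≤ typeOf t k (r ⟨0, by omega⟩) (r ⟨2 * t - 1, by omega⟩)) :
    typeOf t k (r ⟨0, by omega⟩) (r ⟨2 * t - 1, by omega⟩) = 1 ∧ typeOf t k c d = 1 := by
  have hk1 : 1 ≤ k := by omega
  set R : ℕ → (Fin (t*k) → ℕ) :=
    fun n => if h : n < 2*t then r ⟨n, h⟩ else r ⟨0, by omega⟩ with hRdef
  have hR : ∀ n (h : n < 2*t), R n = r ⟨n, h⟩ := by
    intro n h
    rw [hRdef]
    exact dif_pos h
  have hmono' : ∀ a b : ℕ, a < b → b < 2*t → lexLt (R a) (R b) := by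
    intro a b hab hb
    rw [hR a (by omega), hR b hb]
    exact hmono ⟨a, by omega⟩ ⟨b, hb⟩ (by exact hab)
  -- extract the tuples
  have hWex : ∀ i : ℕ, ∃ js, validJs t k js ∧
      ∀ _ : i < t, ∀ fl : Fin (t*k), (d fl : ℤ) - R (2*i+1) fl = vVec k js fl.val := by
    intro i
    by_cases hi : i < t
    · obtain ⟨js, hv, he⟩ := h1 i hi
      refine ⟨js, hv, fun _ fl => ?_⟩
      rw [hR (2*i+1) (by omega)]
      exact he fl
    · exact ⟨fun _ => 1, fun q hq => ⟨le_rfl, by simpa using hk1⟩, fun hit => absurd hit hi⟩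
  choose W hWv hWe using hWex
  have hVex : ∀ i : ℕ, ∃ js, validJs t k js ∧
      ∀ _ : i < t, ∀ fl : Fin (t*k), (c fl : ℤ) - R (2*i) fl = vVec k js fl.val := by
    intro i
    rcases Nat.eq_zero_or_pos i with h0 | h0
    · subst h0
      obtain ⟨js, hv, he⟩ := h0c
      refine ⟨js, hv, fun _ fl => ?_⟩
      rw [show 2*0 = 0 by norm_num, hR 0 (by omega)]
      exact he fl
    · by_cases hi : i < t
      · obtain ⟨js, hv, he⟩ := h2 (i-1) (by omega)
        refine ⟨js, hv, fun _ fl => ?_⟩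
        rw [show 2*i = 2*(i-1)+2 by omega, hR (2*(i-1)+2) (by omega)]
        exact he fl
      · exact ⟨fun _ => 1, fun q hq => ⟨le_rfl, by simpa using hk1⟩, fun hit => absurd hit hi⟩
  choose V hVv hVe using hVex
  obtain ⟨w0, hw0v, hw0e'⟩ := h0d
  have hw0e : ∀ fl : Fin (t*k), (d fl : ℤ) - R 0 fl = vVec k w0 fl.val := by
    intro fl; rw [hR 0 (by omega)]; exact hw0e' fl
  -- pointwise identities for consecutive row differences
  have hDeq : ∀ i, i < t → ∀ fl : Fin (t*k), (R (2*i+1) fl : ℤ) - R (2*i) fl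
      = vVec k w0 fl.val - vVec k (V 0) fl.val + vVec k (V i) fl.val - vVec k (W i) fl.val := by
    intro i hi fl
    have e1 := hw0e fl
    have e2 := hVe 0 (by omega) fl
    rw [show 2*0 = 0 by norm_num] at e2
    have e3 := hVe i hi fl
    have e4 := hWe i hi fl
    omega
  have hGeq : ∀ i, i + 1 < t → ∀ fl : Fin (t*k), (R (2*i+2) fl : ℤ) - R (2*i+1) fl
      = vVec k (W i) fl.val - vVec k (V (i+1)) fl.val + vVec k (V 0) fl.val - vVec k w0 fl.val := by
    intro i hi fl
    have e1 := hw0e fl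
    have e2 := hVe 0 (by omega) fl
    rw [show 2*0 = 0 by norm_num] at e2
    have e3 := hVe (i+1) hi fl
    rw [show 2*(i+1) = 2*i+2 by ring] at e3
    have e4 := hWe i (by omega) fl
    omega
  -- tuple order facts
  have hW0lt : ∀ i, i < t → tLt t w0 (W i) := by
    intro i hi
    refine tLt_of_rows_lexLt hk1 hw0v (hWv i) (fun fl => ?_)
      (hmono' 0 (2*i+1) (by omega) (by omega))
    have e1 := hw0e fl
    have e4 := hWe i hi fl
    omega
  have hV0lt : ∀ i, 1 ≤ i → i < t → tLt t (V 0) (V i) := by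
    intro i h0 hi
    refine tLt_of_rows_lexLt hk1 (hVv 0) (hVv i) (fun fl => ?_)
      (hmono' 0 (2*i) (by omega) (by omega))
    have e2 := hVe 0 (by omega) fl
    rw [show 2*0 = 0 by norm_num] at e2
    have e3 := hVe i hi fl
    omega
  have hWWlt : ∀ i, i < t - 1 → tLt t (W i) (W (t-1)) := by
    intro i hi
    refine tLt_of_rows_lexLt hk1 (hWv i) (hWv (t-1)) (fun fl => ?_)
      (hmono' (2*i+1) (2*(t-1)+1) (by omega) (by omega))
    have e4 := hWe i (by omega) fl
    have e5 := hWe (t-1) (by omega) fl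
    omega
  have hcdheq : ∀ fl : Fin (t*k), (d fl : ℤ) - c fl
      = vVec k w0 fl.val - vVec k (V 0) fl.val := by
    intro fl
    have e1 := hw0e fl
    have e2 := hVe 0 (by omega) fl
    rw [show 2*0 = 0 by norm_num] at e2
    omega
  have hcdlt : tLt t w0 (V 0) := tLt_of_rows_lexLt hk1 hw0v (hVv 0) hcdheq hcd
  obtain ⟨pm, hpmt, hpmag, hpmlt⟩ := hcdlt
  obtain ⟨pt0, hpt0t, hpt0ag, hpt0lt⟩ := hW0lt (t-1) (by omega)
  -- typeOf computations
  have hcd_type : typeOf t k c d = pm + 1 :=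
    typeOf_eq hk1 hw0v (hVv 0) hcdheq hpmt hpmag hpmlt
  have hrr_type : typeOf t k (r ⟨0, by omega⟩) (r ⟨2*t-1, by omega⟩) = pt0 + 1 := by
    have hmain : typeOf t k (R 0) (R (2*t-1)) = pt0 + 1 := by
      refine typeOf_eq hk1 hw0v (hWv (t-1)) (fun fl => ?_) hpt0t hpt0ag hpt0lt
      have e1 := hw0e fl
      have e5 := hWe (t-1) (by omega) fl
      rw [show 2*(t-1)+1 = 2*t-1 by omega] at e5
      omega
    rw [hR 0 (by omega), hR (2*t-1) (by omega)] at hmain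
    exact hmain
  have hpmle : pm ≤ pt0 := by
    rw [hcd_type, hrr_type] at hty
    omega
  have hptzero : pt0 = 0 := by
    by_contra hptne
    have hpt1 : 1 ≤ pt0 := by omega
    have GOOD : ∀ p, p < t → ∀ i, i < t → i + p ≤ t - 2 + pt0 →
        W i p = w0 p ∧ V i p = V 0 p := by
      intro p
      induction p using Nat.strong_induction_on with
      | _ p IH =>
        intro hp i hit hibd
        have shW : ∀ i' q, i' < t → q < p → i' + q ≤ t - 2 + pt0 → W i' q = w0 q :=
          fun i' q hi' hq hbd => (IH q hq (by omega) i' hi' hbd).1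
        have shV : ∀ i' q, i' < t → q < p → i' + q ≤ t - 2 + pt0 → V i' q = V 0 q :=
          fun i' q hi' hq hbd => (IH q hq (by omega) i' hi' hbd).2
        have hb0pos : 1 ≤ w0 p := (hw0v p (by omega)).1
        have hb0k : w0 p ≤ k := (hw0v p (by omega)).2
        have ha1pos : 1 ≤ V 0 p := (hVv 0 p (by omega)).1
        have ha1k : V 0 p ≤ k := (hVv 0 p (by omega)).2
        rcases Nat.lt_or_ge p pt0 with hph | hph
        · -- Phase 1 : all blocks strictly before pt0
          have hWeq : ∀ i', i' < t → W i' p = w0 p := by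
            intro i' hi'
            have htop : W (t-1) p = w0 p := (hpt0ag p hph).symm
            rcases Nat.eq_or_lt_of_le (show i' ≤ t-1 by omega) with he | hlt2
            · rw [he]; exact htop
            · have hle1 : w0 p ≤ W i' p :=
                tLt_coord_le (hW0lt i' hi') p
                  (fun q hq => (shW i' q hi' hq (by omega)).symm)
              have hle2 : W i' p ≤ W (t-1) p :=
                tLt_coord_le (hWWlt i' (by omega)) p
                  (fun q hq => by
                    rw [shW i' q hi' hq (by omega), shW (t-1) q (by omega) hq (by omega)])
              omega
          refine ⟨hWeq i hit, ?_⟩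
          rcases Nat.eq_zero_or_pos i with h0 | h0
          · rw [h0]
          · by_contra hne
            have hle : V 0 p < V i p := by
              have := tLt_coord_le (hV0lt i h0 hit) p
                (fun q hq => (shV i q hit hq (by omega)).symm)
              omega
            have hbieq := hWeq i hit
            refine mega hk1 (show p < t by omega)
              (hmono' (2*i) (2*i+1) (by omega) (by omega))
              (hDeq i hit)
              (fun q hq => (shW i q hit hq (by omega)).symm)
              (fun q hq => (shV i q hit hq (by omega)).symm)
              rfl
              (ang_congr k (V i) (V 0) p (fun q hq => shV i q hit hq (by omega)))
              (V 0 p - 1) (by omega)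
              ?_ ?_
            · rw [hbieq, if_pos (by omega : V 0 p - 1 + 1 = V 0 p),
                if_neg (by omega : ¬ V 0 p - 1 + 1 = V i p)]
              have hAg := ang_pos k ((List.range p).map (V 0))
              split_ifs <;> omega
            · intro q hq
              rw [hbieq, if_neg (by omega : ¬ q + 1 = V 0 p),
                if_neg (by omega : ¬ q + 1 = V i p)]
              split_ifs <;> ring
        · -- Phase 2 : blocks from pt0 onwards
          have hbmon : ∀ i', i' < t → i' + p ≤ t - 1 + pt0 → w0 p ≤ W i' p := by
            intro i' hi' hbd
            exact tLt_coord_le (hW0lt i' hi') p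
              (fun q hq => (shW i' q hi' hq (by omega)).symm)
          have hamon : ∀ i', 1 ≤ i' → i' < t → i' + p ≤ t - 1 + pt0 → V 0 p ≤ V i' p := by
            intro i' h1' hi' hbd
            exact tLt_coord_le (hV0lt i' h1' hi') p
              (fun q hq => (shV i' q hi' hq (by omega)).symm)
          have hWg1 := ang_pos k ((List.range p).map w0)
          have hAg1 := ang_pos k ((List.range p).map (V 0))
          rcases lt_trichotomy (w0 p) (V 0 p) with hcc | hcc | hcc
          · -- Case b0 < a1
            have hbi : W i p = w0 p := by
              by_contra hbne
              have hb : w0 p < W i p := by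
                have := hbmon i hit (by omega); omega
              have hanx : V 0 p ≤ V (i+1) p := hamon (i+1) (by omega) (by omega) (by omega)
              refine mega hk1 (show p < t by omega)
                (hmono' (2*i+1) (2*i+2) (by omega) (by omega))
                (hGeq i (by omega))
                (fun q hq => shW i q hit hq (by omega))
                (fun q hq => shV (i+1) q (by omega) hq (by omega))
                (ang_congr k (W i) w0 p (fun q hq => shW i q hit hq (by omega)))
                rfl
                (w0 p - 1) (by omega) ?_ ?_
              · rw [if_neg (by omega : ¬ w0 p - 1 + 1 = W i p),
                  if_neg (by omega : ¬ w0 p - 1 + 1 = V (i+1) p),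
                  if_neg (by omega : ¬ w0 p - 1 + 1 = V 0 p),
                  if_pos (by omega : w0 p - 1 + 1 = w0 p)]
                omega
              · intro q hq
                rw [if_neg (by omega : ¬ q + 1 = W i p),
                  if_neg (by omega : ¬ q + 1 = V (i+1) p),
                  if_neg (by omega : ¬ q + 1 = V 0 p),
                  if_neg (by omega : ¬ q + 1 = w0 p)]
                ring
            refine ⟨hbi, ?_⟩
            rcases Nat.eq_zero_or_pos i with h0 | h0
            · rw [h0]
            by_contra hne
            have ha : V 0 p < V i p := by
              have := hamon i h0 hit (by omega); omega
            refine mega hk1 (show p < t by omega)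
              (hmono' (2*i) (2*i+1) (by omega) (by omega))
              (hDeq i hit)
              (fun q hq => (shW i q hit hq (by omega)).symm)
              (fun q hq => (shV i q hit hq (by omega)).symm)
              rfl
              (ang_congr k (V i) (V 0) p (fun q hq => shV i q hit hq (by omega)))
              (V 0 p - 1) (by omega) ?_ ?_
            · rw [hbi, if_neg (by omega : ¬ V 0 p - 1 + 1 = w0 p),
                if_pos (by omega : V 0 p - 1 + 1 = V 0 p),
                if_neg (by omega : ¬ V 0 p - 1 + 1 = V i p)]
              omega
            · intro q hq
              rw [hbi, if_neg (by omega : ¬ q + 1 = V 0 p),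
                if_neg (by omega : ¬ q + 1 = V i p)]
              split_ifs <;> ring
          · -- Case b0 = a1, here Wg < Ag
            have hpmp : pm < p := by
              rcases Nat.eq_or_lt_of_le (show pm ≤ p by omega) with he | hlt2
              · exfalso; rw [he] at hpmlt; omega
              · exact hlt2
            have hWAlt : ang k ((List.range p).map w0) < ang k ((List.range p).map (V 0)) :=
              ang_lt k w0 (V 0) p pm hpmp hpmag hpmlt (fun q hq => hw0v q (by omega))
            have haV : ∀ i', i' < t → i' + p ≤ t - 1 + pt0 → V i' p = V 0 p := by
              intro i' hi' hbd
              rcases Nat.eq_zero_or_pos i' with h0 | h0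
              · rw [h0]
              by_contra hne
              have ha : V 0 p < V i' p := by
                have := hamon i' h0 hi' hbd; omega
              have hble : w0 p ≤ W i' p := hbmon i' hi' hbd
              refine mega hk1 (show p < t by omega)
                (hmono' (2*i') (2*i'+1) (by omega) (by omega))
                (hDeq i' hi')
                (fun q hq => (shW i' q hi' hq (by omega)).symm)
                (fun q hq => (shV i' q hi' hq (by omega)).symm)
                rfl
                (ang_congr k (V i') (V 0) p (fun q hq => shV i' q hi' hq (by omega)))
                (w0 p - 1) (by omega) ?_ ?_
              · rw [if_pos (by omega : w0 p - 1 + 1 = w0 p),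
                  if_pos (by omega : w0 p - 1 + 1 = V 0 p),
                  if_neg (by omega : ¬ w0 p - 1 + 1 = V i' p)]
                split_ifs <;> omega
              · intro q hq
                rw [if_neg (by omega : ¬ q + 1 = w0 p),
                  if_neg (by omega : ¬ q + 1 = V 0 p),
                  if_neg (by omega : ¬ q + 1 = V i' p),
                  if_neg (by omega : ¬ q + 1 = W i' p)]
                ring
            have hnx : V (i+1) p = V 0 p := haV (i+1) (by omega) (by omega)
            have hbi : W i p = w0 p := by
              by_contra hbne
              have hb : w0 p < W i p := by
                have := hbmon i hit (by omega); omega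
              refine mega hk1 (show p < t by omega)
                (hmono' (2*i+1) (2*i+2) (by omega) (by omega))
                (hGeq i (by omega))
                (fun q hq => shW i q hit hq (by omega))
                (fun q hq => shV (i+1) q (by omega) hq (by omega))
                (ang_congr k (W i) w0 p (fun q hq => shW i q hit hq (by omega)))
                rfl
                (w0 p - 1) (by omega) ?_ ?_
              · rw [if_neg (by omega : ¬ w0 p - 1 + 1 = W i p),
                  if_pos (by omega : w0 p - 1 + 1 = V (i+1) p),
                  if_pos (by omega : w0 p - 1 + 1 = V 0 p),
                  if_pos (by omega : w0 p - 1 + 1 = w0 p)]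
                omega
              · intro q hq
                rw [if_neg (by omega : ¬ q + 1 = W i p),
                  if_neg (by omega : ¬ q + 1 = V (i+1) p),
                  if_neg (by omega : ¬ q + 1 = V 0 p),
                  if_neg (by omega : ¬ q + 1 = w0 p)]
                ring
            exact ⟨hbi, haV i hit (by omega)⟩
          · -- Case a1 < b0
            have haV : ∀ i', i' < t → i' + p ≤ t - 1 + pt0 → V i' p = V 0 p := by
              intro i' hi' hbd
              rcases Nat.eq_zero_or_pos i' with h0 | h0
              · rw [h0]
              by_contra hne
              have ha : V 0 p < V i' p := by
                have := hamon i' h0 hi' hbd; omega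
              have hble : w0 p ≤ W i' p := hbmon i' hi' hbd
              refine mega hk1 (show p < t by omega)
                (hmono' (2*i') (2*i'+1) (by omega) (by omega))
                (hDeq i' hi')
                (fun q hq => (shW i' q hi' hq (by omega)).symm)
                (fun q hq => (shV i' q hi' hq (by omega)).symm)
                rfl
                (ang_congr k (V i') (V 0) p (fun q hq => shV i' q hi' hq (by omega)))
                (V 0 p - 1) (by omega) ?_ ?_
              · rw [if_neg (by omega : ¬ V 0 p - 1 + 1 = w0 p),
                  if_pos (by omega : V 0 p - 1 + 1 = V 0 p),
                  if_neg (by omega : ¬ V 0 p - 1 + 1 = V i' p),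
                  if_neg (by omega : ¬ V 0 p - 1 + 1 = W i' p)]
                omega
              · intro q hq
                rw [if_neg (by omega : ¬ q + 1 = w0 p),
                  if_neg (by omega : ¬ q + 1 = V 0 p),
                  if_neg (by omega : ¬ q + 1 = V i' p),
                  if_neg (by omega : ¬ q + 1 = W i' p)]
                ring
            have hnx : V (i+1) p = V 0 p := haV (i+1) (by omega) (by omega)
            have hbi : W i p = w0 p := by
              by_contra hbne
              have hb : w0 p < W i p := by
                have := hbmon i hit (by omega); omega
              refine mega hk1 (show p < t by omega)
                (hmono' (2*i+1) (2*i+2) (by omega) (by omega))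
                (hGeq i (by omega))
                (fun q hq => shW i q hit hq (by omega))
                (fun q hq => shV (i+1) q (by omega) hq (by omega))
                (ang_congr k (W i) w0 p (fun q hq => shW i q hit hq (by omega)))
                rfl
                (w0 p - 1) (by omega) ?_ ?_
              · rw [if_neg (by omega : ¬ w0 p - 1 + 1 = W i p),
                  if_neg (by omega : ¬ w0 p - 1 + 1 = V (i+1) p),
                  if_neg (by omega : ¬ w0 p - 1 + 1 = V 0 p),
                  if_pos (by omega : w0 p - 1 + 1 = w0 p)]
                omega
              · intro q hq
                rw [hnx, if_neg (by omega : ¬ q + 1 = W i p),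
                  if_neg (by omega : ¬ q + 1 = w0 p)]
                split_ifs <;> ring
            exact ⟨hbi, haV i hit (by omega)⟩
    -- the final contradiction : w0 = W 0, so rows 0 and 1 coincide
    have hall : ∀ q, q < t → w0 q = W 0 q :=
      fun q hq => ((GOOD q hq 0 (by omega) (by omega)).1).symm
    obtain ⟨i1, hagr, hlt⟩ := hmono' 0 1 (by omega) (by omega)
    have e1 := hw0e i1
    have e4 := hWe 0 (by omega) i1
    rw [show 2*0+1 = 1 by norm_num] at e4
    have hvv : vVec k w0 i1.val = vVec k (W 0) i1.val :=
      vVec_congr w0 (W 0) i1.val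
        (fun q hq => hall q (by have := div_lt_top hk1 i1.isLt; omega))
    omega
  rw [hrr_type, hcd_type, hptzero]
  omega
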